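/- Fix b > 0, M > 0 and ε₀ > 0. Let ρ : ℝ³ → ℝ be nonnegative, integrable with ∫_{ℝ³} ρ = M, and ellipsoidally symmetric, i.e. ρ(x) = ρ(r_b(x)) a.e. If x̄ ∈ ℝ³ satisfies ∫_{|x−x̄|<1} ρ(x) dx ≥ ε₀, then |x̄| ≤ (4πM/ε₀ + 1)(2b + b⁻¹ + 1). In particular there is a constant r₀ = r₀(b, M, ε₀) such that every such concentration point x̄ satisfies |x̄| + 1 ≤ r₀. -/

import Mathlib

open MeasureTheory Real Set Filter

noncomputable section

/-- Three-dimensional Euclidean space. -/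
abbrev E3 : Type := EuclideanSpace ℝ (Fin 3)

/-- Cylindrical radius `η(x) = √(x₁² + x₂²)`. -/
def eta (x : E3) : ℝ := Real.sqrt ((x 0) ^ 2 + (x 1) ^ 2)

/-- Ellipsoidal radius `r_b(x) = √(η(x)² + x₃²/b²)`. -/
def rb (b : ℝ) (x : E3) : ℝ := Real.sqrt ((eta x) ^ 2 + (x 2) ^ 2 / b ^ 2)

/-- Newtonian potential `Bρ(x) = ∫ |x-y|⁻¹ ρ(y) dy`. -/
def Bpot (ρ : E3 → ℝ) (x : E3) : ℝ := ∫ y : E3, ρ y / ‖x - y‖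

/-- Cylindrical mass `m_ρ(s) = ∫_{η(y) < s} ρ(y) dy`. -/
def mMass (ρ : E3 → ℝ) (s : ℝ) : ℝ := ∫ y in {y : E3 | eta y < s}, ρ y

/-- Ellipsoidal mass `n_{b,ρ}(s) = ∫_{r_b(y) ≤ s} ρ(y) dy`. -/
def nMass (b : ℝ) (ρ : E3 → ℝ) (s : ℝ) : ℝ := ∫ y in {y : E3 | rb b y ≤ s}, ρ y

/-- `A(s) = s ∫₀ˢ f(t) t⁻² dt`. -/
def Afun (f : ℝ → ℝ) (s : ℝ) : ℝ := s * ∫ t in (0:ℝ)..s, f t / t ^ 2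

/-- `T = e^S`. -/
def Tfun (S : ℝ → ℝ) (n : ℝ) : ℝ := Real.exp (S n)

/-- The energy functional `E_b(ρ)`. -/
def Eb (b : ℝ) (f S L : ℝ → ℝ) (ρ : E3 → ℝ) : ℝ :=
  (∫ x : E3, Afun f (ρ x) * Tfun S (nMass b ρ (rb b x)))
    + (1 / 2) * (∫ x : E3, ρ x * L (mMass ρ (eta x)) / (eta x) ^ 2)
    - (1 / 2) * (∫ x : E3, ρ x * Bpot ρ x)

/-- The three integrals entering `E_b(ρ)` are finite. -/
def EbFinite (b : ℝ) (f S L : ℝ → ℝ) (ρ : E3 → ℝ) : Prop :=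
  Integrable (fun x : E3 => Afun f (ρ x) * Tfun S (nMass b ρ (rb b x))) ∧
  Integrable (fun x : E3 => ρ x * L (mMass ρ (eta x)) / (eta x) ^ 2) ∧
  Integrable (fun x : E3 => ρ x * Bpot ρ x)

/-- Ellipsoidal symmetry: `ρ(x) = ρ(r_b(x))`, i.e. `ρ` is a.e. a function of `r_b`. -/
def EllipSym (b : ℝ) (ρ : E3 → ℝ) : Prop := ∃ g : ℝ → ℝ, ∀ᵐ x : E3, ρ x = g (rb b x)

/-- The admissible set `W^b`. -/
def MemWb (b M : ℝ) (f S L : ℝ → ℝ) (ρ : E3 → ℝ) : Prop :=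
  (∀ᵐ x : E3, 0 ≤ ρ x) ∧ Integrable ρ ∧ (∫ x : E3, ρ x) = M ∧ EllipSym b ρ ∧
    EbFinite b f S L ρ

/-- `ρ` minimizes `E_b` over `W^b`. -/
def MinimizesWb (b M : ℝ) (f S L : ℝ → ℝ) (ρ : E3 → ℝ) : Prop :=
  MemWb b M f S L ρ ∧ ∀ σ, MemWb b M f S L σ → Eb b f S L ρ ≤ Eb b f S L σ

/-- The truncated admissible set `W^b_R`. -/
def MemWbR (b M R : ℝ) (ρ : E3 → ℝ) : Prop :=
  (∀ᵐ x : E3, 0 ≤ ρ x) ∧ Integrable ρ ∧ (∫ x : E3, ρ x) = M ∧ EllipSym b ρ ∧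
    (∀ x : E3, R ≤ ‖x‖ → ρ x = 0) ∧ (∀ᵐ x : E3, ρ x ≤ R)

/-- `ρ` minimizes `E_b` over `W^b_R`. -/
def MinimizesWbR (b M : ℝ) (f S L : ℝ → ℝ) (R : ℝ) (ρ : E3 → ℝ) : Prop :=
  MemWbR b M R ρ ∧ ∀ σ, MemWbR b M R σ → Eb b f S L ρ ≤ Eb b f S L σ

/-- The potential function `E'_b(ρ)`. -/
def Ebprime (b : ℝ) (f S L : ℝ → ℝ) (ρ : E3 → ℝ) (x : E3) : ℝ :=
  deriv (Afun f) (ρ x) * Tfun S (nMass b ρ (rb b x))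
    + (∫ y in {y : E3 | rb b x < rb b y}, Afun f (ρ y) * deriv (Tfun S) (nMass b ρ (rb b y)))
    + (∫ s in Ioi (eta x), L (mMass ρ s) / s ^ 3)
    - Bpot ρ x

/-- Condition (A1). -/
def CondA1 (f : ℝ → ℝ) : Prop :=
  (∀ s > (0:ℝ), 0 ≤ f s) ∧ ContDiffOn ℝ 1 f (Ioi 0) ∧ StrictMonoOn f (Ioi 0) ∧
  Tendsto (fun s : ℝ => f s / s ^ ((4:ℝ)/3)) (nhdsWithin 0 (Ioi 0)) (nhds 0) ∧
  Tendsto (fun s : ℝ => f s / s ^ ((4:ℝ)/3)) atTop atTop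

/-- Condition (A2). -/
def CondA2 (f : ℝ → ℝ) (γ : ℝ) : Prop :=
  1 < γ ∧ Tendsto (fun s : ℝ => f s / s ^ γ) atTop (nhds 0)

/-- Condition (A3): `L` nonnegative, absolutely continuous on `[0,M]`, `L(0)=0`. -/
def CondA3 (M : ℝ) (L : ℝ → ℝ) : Prop :=
  (∀ m ∈ Icc (0:ℝ) M, 0 ≤ L m) ∧ L 0 = 0 ∧
  ∃ L' : ℝ → ℝ, IntegrableOn L' (Icc 0 M) ∧ ∀ m ∈ Icc (0:ℝ) M, L m = ∫ t in (0:ℝ)..m, L' t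

/-- Condition (A4). -/
def CondA4 (M : ℝ) (L : ℝ → ℝ) : Prop :=
  (∀ a ∈ Icc (0:ℝ) 1, ∀ m ∈ Icc (0:ℝ) M, a ^ ((4:ℝ)/3) * L m ≤ L (a * m)) ∧
  MonotoneOn L (Icc 0 M)

/-- Condition (A5). -/
def CondA5 (M : ℝ) (S : ℝ → ℝ) : Prop := ContDiffOn ℝ 1 S (Icc 0 M) ∧ S 0 = 0

/-- Condition (A6). -/
def CondA6 (M : ℝ) (S : ℝ → ℝ) : Prop :=
  ∀ a ∈ Icc (0:ℝ) 1, ∀ n ∈ Icc (0:ℝ) M,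
    a ^ ((2:ℝ)/3) * Real.exp (S n) ≤ Real.exp (S (a * n)) ∧
    a ^ ((2:ℝ)/3) * Real.exp (S n) ≤ Real.exp (S (M - a * M + a * n))

/-- Condition (A7): the entropy is non-increasing near the total mass `M`. -/
def CondA7 (M : ℝ) (S : ℝ → ℝ) : Prop :=
  ∃ δ₀ > (0:ℝ), AntitoneOn S (Icc (M - δ₀) M)

/-- Unit radial vector in cylindrical coordinates. -/
def iEta (x : E3) : E3 := (eta x)⁻¹ • (WithLp.equiv 2 (Fin 3 → ℝ)).symm ![x 0, x 1, 0]
set_option linter.unnecessarySeqFocus false in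
private def dmap (t : ℝ) : E3 →ₗ[ℝ] E3 where
  toFun x := WithLp.toLp 2 (fun i => if i = 2 then t * x i else x i)
  map_add' x y := by ext i; by_cases h : i = 2 <;> simp [h, PiLp.add_apply] <;> ring
  map_smul' c x := by ext i; by_cases h : i = 2 <;> simp [h, PiLp.smul_apply, smul_eq_mul] <;> ring

private def DL (b : ℝ) (hb : 0 < b) : E3 ≃ₗ[ℝ] E3 :=
  LinearEquiv.ofLinear (dmap b⁻¹) (dmap b)
    (by apply LinearMap.ext; intro x; ext i; by_cases h : i = 2 <;>
        simp [dmap, h] ; field_simp)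
    (by apply LinearMap.ext; intro x; ext i; by_cases h : i = 2 <;>
        simp [dmap, h] ; field_simp)

private lemma DL_apply0 (b : ℝ) (hb : 0 < b) (x : E3) : DL b hb x 0 = x 0 := rfl
private lemma DL_apply1 (b : ℝ) (hb : 0 < b) (x : E3) : DL b hb x 1 = x 1 := rfl
private lemma DL_apply2 (b : ℝ) (hb : 0 < b) (x : E3) : DL b hb x 2 = b⁻¹ * x 2 := rfl
private lemma DLs_apply0 (b : ℝ) (hb : 0 < b) (x : E3) : (DL b hb).symm x 0 = x 0 := rfl
private lemma DLs_apply1 (b : ℝ) (hb : 0 < b) (x : E3) : (DL b hb).symm x 1 = x 1 := rfl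
private lemma DLs_apply2 (b : ℝ) (hb : 0 < b) (x : E3) : (DL b hb).symm x 2 = b * x 2 := rfl

private lemma norm_e3 (x : E3) : ‖x‖ = Real.sqrt ((x 0)^2 + (x 1)^2 + (x 2)^2) := by
  rw [EuclideanSpace.norm_eq]
  congr 1
  simp [Fin.sum_univ_three, sq_abs]

private lemma rb_eq_norm (b : ℝ) (hb : 0 < b) (x : E3) : rb b x = ‖DL b hb x‖ := by
  rw [norm_e3, rb, eta, Real.sq_sqrt (by positivity), DL_apply0, DL_apply1, DL_apply2]
  congr 1
  field_simp

private lemma coord0_le_norm (x : E3) : |x 0| ≤ ‖x‖ := by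
  rw [norm_e3, ← Real.sqrt_sq_eq_abs]
  apply Real.sqrt_le_sqrt; nlinarith [sq_nonneg (x 1), sq_nonneg (x 2)]

private lemma coord2_le_norm (x : E3) : |x 2| ≤ ‖x‖ := by
  rw [norm_e3, ← Real.sqrt_sq_eq_abs]
  apply Real.sqrt_le_sqrt; nlinarith [sq_nonneg (x 1), sq_nonneg (x 0)]

private lemma norm_DL_le (b : ℝ) (hb : 0 < b) (x : E3) : ‖DL b hb x‖ ≤ max 1 b⁻¹ * ‖x‖ := by
  have h1 : (0:ℝ) ≤ max 1 b⁻¹ := by positivity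
  have h2 : (1:ℝ) ≤ max 1 b⁻¹ := le_max_left _ _
  have h3 : b⁻¹ ≤ max 1 b⁻¹ := le_max_right _ _
  have hbi : (0:ℝ) ≤ b⁻¹ := by positivity
  rw [norm_e3, norm_e3, DL_apply0, DL_apply1, DL_apply2]
  have hb2 : b⁻¹^2 ≤ (max 1 b⁻¹)^2 := by nlinarith
  have hm2 : 1 ≤ (max 1 b⁻¹)^2 := by nlinarith
  have key : (x 0)^2 + (x 1)^2 + (b⁻¹ * x 2)^2
      ≤ (max 1 b⁻¹)^2 * ((x 0)^2 + (x 1)^2 + (x 2)^2) := by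
    nlinarith [mul_le_mul_of_nonneg_right hb2 (sq_nonneg (x 2)),
      mul_le_mul_of_nonneg_right hm2 (add_nonneg (sq_nonneg (x 0)) (sq_nonneg (x 1)))]
  have := Real.sqrt_le_sqrt key
  rwa [Real.sqrt_mul (by positivity), Real.sqrt_sq h1] at this

private lemma norm_DLsymm_le (b : ℝ) (hb : 0 < b) (x : E3) :
    ‖(DL b hb).symm x‖ ≤ max 1 b * ‖x‖ := by
  have h1 : (0:ℝ) ≤ max 1 b := by positivity
  have h2 : (1:ℝ) ≤ max 1 b := le_max_left _ _
  have h3 : b ≤ max 1 b := le_max_right _ _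
  rw [norm_e3, norm_e3, DLs_apply0, DLs_apply1, DLs_apply2]
  have hb2 : b^2 ≤ (max 1 b)^2 := by nlinarith
  have hm2 : 1 ≤ (max 1 b)^2 := by nlinarith
  have key : (x 0)^2 + (x 1)^2 + (b * x 2)^2
      ≤ (max 1 b)^2 * ((x 0)^2 + (x 1)^2 + (x 2)^2) := by
    nlinarith [mul_le_mul_of_nonneg_right hb2 (sq_nonneg (x 2)),
      mul_le_mul_of_nonneg_right hm2 (add_nonneg (sq_nonneg (x 0)) (sq_nonneg (x 1)))]
  have := Real.sqrt_le_sqrt key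
  rwa [Real.sqrt_mul (by positivity), Real.sqrt_sq h1] at this

private lemma measurePreserving_conj (D : E3 ≃ₗ[ℝ] E3) (R : E3 ≃ₗᵢ[ℝ] E3) :
    MeasurePreserving (fun x : E3 => D.symm (R (D x))) volume volume := by
  have hdet : LinearMap.det D.symm.toLinearMap * LinearMap.det D.toLinearMap = 1 := by
    rw [← LinearMap.det_comp]
    have h : D.symm.toLinearMap ∘ₗ D.toLinearMap = LinearMap.id := by
      apply LinearMap.ext; intro x; simp
    rw [h, LinearMap.det_id]
  have h1 : LinearMap.det D.toLinearMap ≠ 0 := by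
    intro h; rw [h, mul_zero] at hdet; exact one_ne_zero hdet.symm
  have h2 : LinearMap.det D.symm.toLinearMap ≠ 0 := by
    intro h; rw [h, zero_mul] at hdet; exact one_ne_zero hdet.symm
  have mD : Measure.map D volume
      = ENNReal.ofReal |(LinearMap.det D.toLinearMap)⁻¹| • volume := by
    simpa using Measure.map_linearMap_addHaar_eq_smul_addHaar (volume : Measure E3) h1
  have mDs : Measure.map D.symm volume
      = ENNReal.ofReal |(LinearMap.det D.symm.toLinearMap)⁻¹| • volume := by
    simpa using Measure.map_linearMap_addHaar_eq_smul_addHaar (volume : Measure E3) h2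
  have measD : Measurable D := D.toLinearMap.continuous_of_finiteDimensional.measurable
  have measDs : Measurable D.symm := D.symm.toLinearMap.continuous_of_finiteDimensional.measurable
  have measR : Measurable R := R.continuous.measurable
  refine ⟨measDs.comp (measR.comp measD), ?_⟩
  have hmm : Measure.map (fun x : E3 => D.symm (R (D x))) volume
      = Measure.map D.symm (Measure.map R (Measure.map D volume)) := by
    rw [Measure.map_map measR measD, Measure.map_map measDs (measR.comp measD)]
    rfl
  rw [hmm, mD, Measure.map_smul, R.measurePreserving.map_eq, Measure.map_smul, mDs, smul_smul,
    ← ENNReal.ofReal_mul (abs_nonneg _), ← abs_mul, ← mul_inv]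
  rw [mul_comm (LinearMap.det D.toLinearMap), hdet]
  norm_num

private lemma transport_lemma (b ε₀ : ℝ) (hb : 0 < b) (hε : 0 < ε₀)
    (ρ : E3 → ℝ) (hnn : ∀ᵐ x : E3, 0 ≤ ρ x) (hint : Integrable ρ)
    (g : ℝ → ℝ) (hg : ∀ᵐ x : E3, ρ x = g (rb b x))
    (xbar : E3) (hconc : ε₀ ≤ ∫ x in Metric.ball xbar 1, ρ x)
    (c : E3) (hc : rb b c = rb b xbar) :
    ε₀ ≤ ∫ x in Metric.ball c (max 1 b * max 1 b⁻¹), ρ x := by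
  have hbi : (0:ℝ) < b⁻¹ := by positivity
  set κ := max 1 b * max 1 b⁻¹ with hκdef
  have hm1 : (1:ℝ) ≤ max 1 b := le_max_left _ _
  have hm2 : (1:ℝ) ≤ max 1 b⁻¹ := le_max_left _ _
  have hκ1 : 1 ≤ κ := by nlinarith
  have hκ0 : 0 < κ := by linarith
  set D := DL b hb with hD
  have hnorm : ‖D xbar‖ = ‖D c‖ := by
    rw [← rb_eq_norm b hb, ← rb_eq_norm b hb, hc]
  set R : E3 ≃ₗᵢ[ℝ] E3 := Submodule.reflection (ℝ ∙ (D xbar - D c))ᗮ with hRdef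
  have hRx : R (D xbar) = D c := Submodule.reflection_sub hnorm
  set TL : E3 ≃ₗ[ℝ] E3 := D.trans (R.toLinearEquiv.trans D.symm) with hTLdef
  have hTapp : ∀ x : E3, TL x = D.symm (R (D x)) := fun x => rfl
  have hTx : TL xbar = c := by rw [hTapp, hRx]; exact D.symm_apply_apply c
  have hmp : MeasurePreserving (⇑TL) volume volume := by
    have h := measurePreserving_conj D R
    have : (fun x : E3 => D.symm (R (D x))) = ⇑TL := by funext x; rw [hTapp]
    rwa [this] at h
  have hemb : MeasurableEmbedding (⇑TL) := by
    have h := TL.toContinuousLinearEquiv.toHomeomorph.measurableEmbedding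
    simpa using h
  set B := Metric.ball xbar 1 with hB
  have hmeasB : MeasurableSet B := measurableSet_ball
  have hTB : MeasurableSet (⇑TL '' B) := hemb.measurableSet_image' hmeasB
  have e1 : ∫ x in B, ρ x = ∫ x in B, g (rb b x) :=
    setIntegral_congr_ae hmeasB (by filter_upwards [hg] with x hx _; exact hx)
  have e2 : ∫ x in ⇑TL '' B, g (rb b x) = ∫ x in B, g (rb b (TL x)) :=
    hmp.setIntegral_image_emb hemb _ _
  have hrbT : ∀ x : E3, rb b (TL x) = rb b x := by
    intro x
    rw [rb_eq_norm b hb, rb_eq_norm b hb, hTapp]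
    rw [show DL b hb ((DL b hb).symm (R (DL b hb x))) = R (DL b hb x) from
      (DL b hb).apply_symm_apply _]
    exact R.norm_map _
  have e3 : ∫ x in ⇑TL '' B, ρ x = ∫ x in ⇑TL '' B, g (rb b x) :=
    setIntegral_congr_ae hTB (by filter_upwards [hg] with x hx _; exact hx)
  have hsub : ⇑TL '' B ⊆ Metric.ball c κ := by
    rintro y ⟨x, hx, rfl⟩
    rw [Metric.mem_ball] at hx ⊢
    have hd : dist x xbar = ‖x - xbar‖ := dist_eq_norm _ _
    have hsubeq : TL x - c = TL (x - xbar) := by rw [map_sub, hTx]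
    calc dist (TL x) c = ‖TL x - c‖ := dist_eq_norm _ _
    _ = ‖TL (x - xbar)‖ := by rw [hsubeq]
    _ = ‖D.symm (R (D (x - xbar)))‖ := by rw [hTapp]
    _ ≤ max 1 b * ‖R (D (x - xbar))‖ := norm_DLsymm_le b hb _
    _ = max 1 b * ‖D (x - xbar)‖ := by rw [R.norm_map]
    _ ≤ max 1 b * (max 1 b⁻¹ * ‖x - xbar‖) :=
        mul_le_mul_of_nonneg_left (norm_DL_le b hb _) (by positivity)
    _ < max 1 b * (max 1 b⁻¹ * 1) := by
        apply mul_lt_mul_of_pos_left _ (by positivity)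
        apply mul_lt_mul_of_pos_left _ (by positivity)
        rw [← hd]; exact hx
    _ = κ := by rw [hκdef, mul_one]
  calc ε₀ ≤ ∫ x in B, ρ x := hconc
  _ = ∫ x in B, g (rb b x) := e1
  _ = ∫ x in B, g (rb b (TL x)) := by
      apply setIntegral_congr_ae hmeasB
      filter_upwards with x _
      rw [hrbT]
  _ = ∫ x in ⇑TL '' B, g (rb b x) := e2.symm
  _ = ∫ x in ⇑TL '' B, ρ x := e3.symm
  _ ≤ ∫ x in Metric.ball c κ, ρ x :=
      setIntegral_mono_set hint.integrableOn (ae_restrict_of_ae hnn) hsub.eventuallyLE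

private lemma counting_lemma (M ε₀ : ℝ)
    (ρ : E3 → ℝ) (hnn : ∀ᵐ x : E3, 0 ≤ ρ x) (hint : Integrable ρ)
    (hmass : (∫ x : E3, ρ x) = M)
    (n : ℕ) (c : ℕ → E3) (κ : ℝ)
    (hsep : ∀ j ∈ Finset.range n, ∀ k ∈ Finset.range n, j ≠ k → 2 * κ ≤ dist (c j) (c k))
    (hlb : ∀ k ∈ Finset.range n, ε₀ ≤ ∫ x in Metric.ball (c k) κ, ρ x) :
    (n : ℝ) * ε₀ ≤ M := by
  have hdisj : (↑(Finset.range n) : Set ℕ).Pairwise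
      (Function.onFun Disjoint fun k => Metric.ball (c k) κ) := by
    intro j hj k hk hjk
    apply Metric.ball_disjoint_ball
    have := hsep j (by simpa using hj) k (by simpa using hk) hjk
    linarith
  have hunion : ∫ x in ⋃ k ∈ Finset.range n, Metric.ball (c k) κ, ρ x
      = ∑ k ∈ Finset.range n, ∫ x in Metric.ball (c k) κ, ρ x :=
    integral_biUnion_finset _ (fun i _ => measurableSet_ball) hdisj
      (fun i _ => hint.integrableOn)
  calc (n : ℝ) * ε₀ = ∑ _k ∈ Finset.range n, ε₀ := by
        simp [Finset.sum_const, mul_comm]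
  _ ≤ ∑ k ∈ Finset.range n, ∫ x in Metric.ball (c k) κ, ρ x := Finset.sum_le_sum hlb
  _ = ∫ x in ⋃ k ∈ Finset.range n, Metric.ball (c k) κ, ρ x := hunion.symm
  _ ≤ ∫ x, ρ x := setIntegral_le_integral hint hnn
  _ = M := hmass

private def vec3 (a b c : ℝ) : E3 := WithLp.toLp 2 (fun i : Fin 3 => if i = 0 then a else if i = 1 then b else c)
private lemma vec3_0 (a b c : ℝ) : vec3 a b c 0 = a := rfl
private lemma vec3_1 (a b c : ℝ) : vec3 a b c 1 = b := rfl
private lemma vec3_2 (a b c : ℝ) : vec3 a b c 2 = c := rfl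

private lemma one_le_abs_nat_sub (j k : ℕ) (h : j ≠ k) : (1:ℝ) ≤ |(j:ℝ) - (k:ℝ)| := by
  rcases lt_or_gt_of_ne h with h' | h'
  · rw [abs_sub_comm, abs_of_nonneg (sub_nonneg.mpr (by exact_mod_cast h'.le))]
    have hh : j + 1 ≤ k := h'
    have : (j:ℝ) + 1 ≤ (k:ℝ) := by exact_mod_cast hh
    linarith
  · rw [abs_of_nonneg (sub_nonneg.mpr (by exact_mod_cast h'.le))]
    have hh : k + 1 ≤ j := h'
    have : (k:ℝ) + 1 ≤ (j:ℝ) := by exact_mod_cast hh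
    linarith

set_option maxHeartbeats 2000000 in
/-- Lemma 11: any unit-ball concentration point of an ellipsoidally symmetric density
of total mass `M` lies within a fixed distance from the origin. -/
theorem statement16 (b M ε₀ : ℝ) (hb : 0 < b) (hM : 0 < M) (hε : 0 < ε₀)
    (ρ : E3 → ℝ) (hnn : ∀ᵐ x : E3, 0 ≤ ρ x) (hint : Integrable ρ)
    (hmass : (∫ x : E3, ρ x) = M) (hsym : EllipSym b ρ)
    (xbar : E3) (hconc : ε₀ ≤ ∫ x in Metric.ball xbar 1, ρ x) :
    ‖xbar‖ ≤ (4 * Real.pi * M / ε₀ + 1) * (2 * b + b⁻¹ + 1) ∧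
    ‖xbar‖ + 1 ≤ (4 * Real.pi * M / ε₀ + 1) * (2 * b + b⁻¹ + 1) + 1 := by
  have hbi : (0:ℝ) < b⁻¹ := by positivity
  obtain ⟨g, hg⟩ := hsym
  have hεM : ε₀ ≤ M := by
    calc ε₀ ≤ ∫ x in Metric.ball xbar 1, ρ x := hconc
    _ ≤ ∫ x, ρ x := setIntegral_le_integral hint hnn
    _ = M := hmass
  set r := rb b xbar with hr
  have hr0 : 0 ≤ r := Real.sqrt_nonneg _
  have hxb : ‖xbar‖ ≤ max 1 b * r := by
    calc ‖xbar‖ = ‖(DL b hb).symm (DL b hb xbar)‖ := by rw [LinearEquiv.symm_apply_apply]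
    _ ≤ max 1 b * ‖DL b hb xbar‖ := norm_DLsymm_le b hb _
    _ = max 1 b * r := by rw [← rb_eq_norm b hb]
  have hq : 1 ≤ M / ε₀ := (one_le_div hε).mpr hεM
  have hq0 : 0 < M / ε₀ := by linarith
  have hπ : (3:ℝ) ≤ Real.pi := Real.pi_gt_three.le
  have hbb : b⁻¹ * b = 1 := inv_mul_cancel₀ (ne_of_gt hb)
  have main : ‖xbar‖ ≤ (4 * Real.pi * M / ε₀ + 1) * (2 * b + b⁻¹ + 1) := by
    have hdivgoal : 4 * Real.pi * M / ε₀ = 4 * Real.pi * (M / ε₀) := by ring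
    rcases le_total 1 b with hb1 | hb1
    · -- case 1 ≤ b
      have hbinv1 : b⁻¹ ≤ 1 := by nlinarith
      have hmax1 : max (1:ℝ) b = b := max_eq_right hb1
      have hmax2 : max (1:ℝ) b⁻¹ = 1 := max_eq_left hbinv1
      set n := ⌊r / 2⌋₊ + 1 with hn
      set ck : ℕ → E3 :=
        fun k => vec3 (Real.sqrt (r^2 - (2*(k:ℝ))^2)) 0 (b * (2*(k:ℝ))) with hck
      have hak : ∀ k ∈ Finset.range n, 2*(k:ℝ) ≤ r := by
        intro k hk
        have hk' : k ≤ ⌊r / 2⌋₊ := Nat.lt_succ_iff.mp (Finset.mem_range.mp hk)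
        have h1 : (k:ℝ) ≤ (⌊r / 2⌋₊ : ℝ) := by exact_mod_cast hk'
        have h2 : ((⌊r / 2⌋₊ : ℝ)) ≤ r / 2 := Nat.floor_le (by positivity)
        linarith
      have hrbck : ∀ k ∈ Finset.range n, rb b (ck k) = r := by
        intro k hk
        have h1 := hak k hk
        have h2 : (0:ℝ) ≤ 2*(k:ℝ) := by positivity
        have h3 : (0:ℝ) ≤ r^2 - (2*(k:ℝ))^2 := by nlinarith
        rw [hck]
        simp only
        rw [rb, eta, vec3_0, vec3_1, vec3_2, Real.sq_sqrt (by positivity),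
          Real.sq_sqrt h3]
        have heq : r^2 - (2*(k:ℝ))^2 + 0^2 + (b * (2*(k:ℝ)))^2 / b^2 = r^2 := by
          field_simp
          ring
        rw [heq, Real.sqrt_sq hr0]
      have hsep : ∀ j ∈ Finset.range n, ∀ k ∈ Finset.range n, j ≠ k →
          2 * b ≤ dist (ck j) (ck k) := by
        intro j _ k _ hjk
        have h2 : (ck j - ck k) 2 = b*(2*(j:ℝ)) - b*(2*(k:ℝ)) := by
          simp [hck, PiLp.sub_apply, vec3_2]
        have h3 := one_le_abs_nat_sub j k hjk
        rw [dist_eq_norm]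
        calc 2 * b = 2*b*1 := by ring
        _ ≤ 2*b*|(j:ℝ)-(k:ℝ)| := by nlinarith
        _ = |b*(2*(j:ℝ)) - b*(2*(k:ℝ))| := by
            rw [show b*(2*(j:ℝ)) - b*(2*(k:ℝ)) = 2*b*((j:ℝ)-(k:ℝ)) by ring, abs_mul,
              abs_of_pos (by positivity : (0:ℝ) < 2*b)]
        _ = |(ck j - ck k) 2| := by rw [h2]
        _ ≤ ‖ck j - ck k‖ := coord2_le_norm _
      have hlb : ∀ k ∈ Finset.range n, ε₀ ≤ ∫ x in Metric.ball (ck k) b, ρ x := by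
        intro k hk
        have h := transport_lemma b ε₀ hb hε ρ hnn hint g hg xbar hconc (ck k)
          ((hrbck k hk).trans hr)
        rwa [hmax1, hmax2, mul_one] at h
      have hcount := counting_lemma M ε₀ ρ hnn hint hmass n ck b hsep hlb
      have h5 : r / 2 < (n:ℝ) := by
        rw [hn]
        push_cast
        exact Nat.lt_floor_add_one _
      have h6 : r * ε₀ ≤ 2 * M := by nlinarith
      have h7 : r ≤ 2 * M / ε₀ := (le_div_iff₀ hε).mpr h6
      calc ‖xbar‖ ≤ b * r := by rw [hmax1] at hxb; exact hxb
      _ ≤ b * (2 * M / ε₀) := mul_le_mul_of_nonneg_left h7 hb.le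
      _ = 2 * b * (M / ε₀) := by ring
      _ ≤ (4 * Real.pi * M / ε₀ + 1) * (2 * b + b⁻¹ + 1) := by
          rw [hdivgoal]
          nlinarith [mul_pos hb hq0,
            mul_nonneg (mul_nonneg (by linarith : (0:ℝ) ≤ Real.pi - 3) hb.le) hq0.le,
            mul_pos hbi hq0, mul_pos (by linarith : (0:ℝ) < Real.pi) hq0]
    · -- case b ≤ 1
      have h1b : 1 ≤ b⁻¹ := by nlinarith
      have hmax1 : max (1:ℝ) b = 1 := max_eq_left hb1
      have hmax2 : max (1:ℝ) b⁻¹ = b⁻¹ := max_eq_right h1b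
      set n := ⌊b * r / 2⌋₊ + 1 with hn
      set ck : ℕ → E3 :=
        fun k => vec3 (2*b⁻¹*(k:ℝ)) (Real.sqrt (r^2 - (2*b⁻¹*(k:ℝ))^2)) 0 with hck
      have hak : ∀ k ∈ Finset.range n, 2*b⁻¹*(k:ℝ) ≤ r := by
        intro k hk
        have hk' : k ≤ ⌊b * r / 2⌋₊ := Nat.lt_succ_iff.mp (Finset.mem_range.mp hk)
        have h1 : (k:ℝ) ≤ (⌊b * r / 2⌋₊ : ℝ) := by exact_mod_cast hk'
        have h2 : ((⌊b * r / 2⌋₊ : ℝ)) ≤ b * r / 2 := Nat.floor_le (by positivity)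
        have h3 : 2*b⁻¹*(k:ℝ) ≤ 2*b⁻¹*(b * r / 2) :=
          mul_le_mul_of_nonneg_left (by linarith) (by positivity)
        have h4 : 2*b⁻¹*(b * r / 2) = r := by
          field_simp
        linarith
      have hrbck : ∀ k ∈ Finset.range n, rb b (ck k) = r := by
        intro k hk
        have h1 := hak k hk
        have h2 : (0:ℝ) ≤ 2*b⁻¹*(k:ℝ) := by positivity
        have h3 : (0:ℝ) ≤ r^2 - (2*b⁻¹*(k:ℝ))^2 := by nlinarith
        rw [hck]
        simp only
        rw [rb, eta, vec3_0, vec3_1, vec3_2, Real.sq_sqrt (by positivity),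
          Real.sq_sqrt h3]
        have heq : (2*b⁻¹*(k:ℝ))^2 + (r^2 - (2*b⁻¹*(k:ℝ))^2) + 0^2 / b^2 = r^2 := by
          field_simp
          ring
        rw [heq, Real.sqrt_sq hr0]
      have hsep : ∀ j ∈ Finset.range n, ∀ k ∈ Finset.range n, j ≠ k →
          2 * b⁻¹ ≤ dist (ck j) (ck k) := by
        intro j _ k _ hjk
        have h2 : (ck j - ck k) 0 = 2*b⁻¹*(j:ℝ) - 2*b⁻¹*(k:ℝ) := by
          simp [hck, PiLp.sub_apply, vec3_0]
        have h3 := one_le_abs_nat_sub j k hjk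
        rw [dist_eq_norm]
        calc 2 * b⁻¹ = 2*b⁻¹*1 := by ring
        _ ≤ 2*b⁻¹*|(j:ℝ)-(k:ℝ)| := by nlinarith
        _ = |2*b⁻¹*(j:ℝ) - 2*b⁻¹*(k:ℝ)| := by
            rw [show 2*b⁻¹*(j:ℝ) - 2*b⁻¹*(k:ℝ) = 2*b⁻¹*((j:ℝ)-(k:ℝ)) by ring, abs_mul,
              abs_of_pos (by positivity : (0:ℝ) < 2*b⁻¹)]
        _ = |(ck j - ck k) 0| := by rw [h2]
        _ ≤ ‖ck j - ck k‖ := coord0_le_norm _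
      have hlb : ∀ k ∈ Finset.range n, ε₀ ≤ ∫ x in Metric.ball (ck k) b⁻¹, ρ x := by
        intro k hk
        have h := transport_lemma b ε₀ hb hε ρ hnn hint g hg xbar hconc (ck k)
          ((hrbck k hk).trans hr)
        rwa [hmax1, hmax2, one_mul] at h
      have hcount := counting_lemma M ε₀ ρ hnn hint hmass n ck b⁻¹ hsep hlb
      have h5 : b * r / 2 < (n:ℝ) := by
        rw [hn]
        push_cast
        exact Nat.lt_floor_add_one _
      have h6 : b * r * ε₀ ≤ 2 * M := by nlinarith
      have h7 : b * r ≤ 2 * M / ε₀ := (le_div_iff₀ hε).mpr h6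
      have h8 : r ≤ b⁻¹ * (2 * M / ε₀) := by
        have := mul_le_mul_of_nonneg_left h7 hbi.le
        calc r = b⁻¹ * (b * r) := by rw [← mul_assoc, hbb, one_mul]
        _ ≤ b⁻¹ * (2 * M / ε₀) := this
      calc ‖xbar‖ ≤ 1 * r := by rw [hmax1] at hxb; exact hxb
      _ = r := one_mul r
      _ ≤ b⁻¹ * (2 * M / ε₀) := h8
      _ = 2 * b⁻¹ * (M / ε₀) := by ring
      _ ≤ (4 * Real.pi * M / ε₀ + 1) * (2 * b + b⁻¹ + 1) := by
          rw [hdivgoal]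
          nlinarith [mul_pos hbi hq0,
            mul_nonneg (mul_nonneg (by linarith : (0:ℝ) ≤ Real.pi - 3) hbi.le) hq0.le,
            mul_pos hb hq0, mul_pos (by linarith : (0:ℝ) < Real.pi) hq0]
  exact ⟨main, by linarith⟩
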